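/- For an island domain (𝒞, 𝒦) the following are equivalent: (i) (𝒞, 𝒦) is a connective island domain; (ii) every system of pre-islands corresponding to (𝒞, 𝒦) is CD-independent; (iii) every system of pre-islands corresponding to (𝒞, 𝒦) is CDW-independent. -/

import Mathlib

open Finset

variable {U : Type*}

/-- `K` covers `S` in the poset `(𝒦, ⊆)`. -/
def Covers (𝒦 : Finset (Finset U)) (S K : Finset U) : Prop :=
  S ⊂ K ∧ ∀ K' ∈ 𝒦, S ⊂ K' → ¬K' ⊂ K

/-- `min h(K) < min h(S)` (for nonempty finite `S`, `K`). -/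
def MinLt (h : U → ℝ) (K S : Finset U) : Prop :=
  ∃ k ∈ K, ∀ s ∈ S, h k < h s

/-- `S` is a pre-island with respect to `(𝒞, 𝒦, h)`. -/
def IsPreIsland (𝒞 𝒦 : Finset (Finset U)) (h : U → ℝ) (S : Finset U) : Prop :=
  S ∈ 𝒞 ∧ S.Nonempty ∧ ∀ K ∈ 𝒦, Covers 𝒦 S K → MinLt h K S

/-- `S` is an island with respect to `(𝒞, 𝒦, h)`. -/
def IsIsland [DecidableEq U] (𝒞 𝒦 : Finset (Finset U)) (h : U → ℝ) (S : Finset U) : Prop :=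
  S ∈ 𝒞 ∧ S.Nonempty ∧ ∀ K ∈ 𝒦, Covers 𝒦 S K → ∀ u ∈ K \ S, ∀ s ∈ S, h u < h s

/-- `(𝒞, 𝒦)` is an island domain on `U`. -/
def IslandDomain [Fintype U] (𝒞 𝒦 : Finset (Finset U)) : Prop :=
  𝒞 ⊆ 𝒦 ∧ Finset.univ ∈ 𝒞

/-- `ℋ` is admissible with respect to `(𝒞, 𝒦)`. -/
def Admissible [DecidableEq U] [Fintype U] (𝒞 𝒦 ℋ : Finset (Finset U)) : Prop :=
  ℋ ⊆ 𝒞 ∧ (∅ : Finset U) ∉ ℋ ∧ Finset.univ ∈ ℋ ∧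
    ∀ 𝒜 ⊆ ℋ, 𝒜.Nonempty → (∀ A ∈ 𝒜, ∀ B ∈ 𝒜, A ⊆ B → A = B) →
      ∃ H ∈ 𝒜, ∀ K ∈ 𝒦, H ⊂ K → ¬K ⊆ 𝒜.sup id

/-- `𝒮` is the system of pre-islands corresponding to `(𝒞, 𝒦, h)` for some `h`. -/
def IsSystemOfPreIslands (𝒞 𝒦 𝒮 : Finset (Finset U)) : Prop :=
  ∃ h : U → ℝ, ∀ S, S ∈ 𝒮 ↔ IsPreIsland 𝒞 𝒦 h S

/-- `𝒮` is the system of islands corresponding to `(𝒞, 𝒦, h)` for some `h`. -/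
def IsSystemOfIslands [DecidableEq U] (𝒞 𝒦 𝒮 : Finset (Finset U)) : Prop :=
  ∃ h : U → ℝ, ∀ S, S ∈ 𝒮 ↔ IsIsland 𝒞 𝒦 h S

/-- `(𝒞, 𝒦)` is a connective island domain. -/
def Connective [DecidableEq U] (𝒞 𝒦 : Finset (Finset U)) : Prop :=
  ∀ A ∈ 𝒞, ∀ B ∈ 𝒞, (A ∩ B).Nonempty → ¬B ⊆ A → ∃ K ∈ 𝒦, A ⊂ K ∧ K ⊆ A ∪ B

/-- Any two members are comparable or disjoint. -/
def CDIndependent [DecidableEq U] (ℋ : Finset (Finset U)) : Prop :=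
  ∀ A ∈ ℋ, ∀ B ∈ ℋ, A ⊆ B ∨ B ⊆ A ∨ A ∩ B = ∅

def WeaklyIndependent [DecidableEq U] (ℋ : Finset (Finset U)) : Prop :=
  ∀ H ∈ ℋ, ∀ 𝒢 ⊆ ℋ, 𝒢.Nonempty → H ⊆ 𝒢.sup id → ∃ G ∈ 𝒢, H ⊆ G

def CDWIndependent [DecidableEq U] (ℋ : Finset (Finset U)) : Prop :=
  CDIndependent ℋ ∧ WeaklyIndependent ℋ

/-- The proximity relation `δ`: `A δ B` iff some `K ∈ 𝒦` with `A ⪯ K` meets `B`. -/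
def Delta [DecidableEq U] (𝒦 : Finset (Finset U)) (A B : Finset U) : Prop :=
  ∃ K ∈ 𝒦, (K = A ∨ Covers 𝒦 A K) ∧ (K ∩ B).Nonempty

def Distant [DecidableEq U] (𝒦 : Finset (Finset U)) (A B : Finset U) : Prop :=
  ¬Delta 𝒦 A B ∧ ¬Delta 𝒦 B A

/-- Any two incomparable members of `ℋ` are distant. -/
def DistantFamily [DecidableEq U] (𝒦 ℋ : Finset (Finset U)) : Prop :=
  ∀ A ∈ ℋ, ∀ B ∈ ℋ, ¬A ⊆ B → ¬B ⊆ A → Distant 𝒦 A B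

/-- A proximity domain: connective and `δ` symmetric on nonempty members of `𝒞`. -/
def ProximityDomain [DecidableEq U] (𝒞 𝒦 : Finset (Finset U)) : Prop :=
  Connective 𝒞 𝒦 ∧
    ∀ A ∈ 𝒞, ∀ B ∈ 𝒞, A.Nonempty → B.Nonempty → (Delta 𝒦 A B ↔ Delta 𝒦 B A)

/-- Every `K ∈ 𝒦` strictly containing `S` contains a cover of `S`. -/
lemma exists_cover_le [DecidableEq U] (𝒦 : Finset (Finset U)) (S : Finset U) :
    ∀ K ∈ 𝒦, S ⊂ K → ∃ K' ∈ 𝒦, Covers 𝒦 S K' ∧ K' ⊆ K := by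
  intro K
  induction K using Finset.strongInductionOn with
  | _ K ih =>
    intro hK hSK
    by_cases hc : ∀ K' ∈ 𝒦, S ⊂ K' → ¬K' ⊂ K
    · exact ⟨K, hK, ⟨hSK, hc⟩, subset_rfl⟩
    · push_neg at hc
      obtain ⟨K', hK', hSK', hK'K⟩ := hc
      obtain ⟨K'', h1, h2, h3⟩ := ih K' hK'K hK' hSK'
      exact ⟨K'', h1, h2, h3.trans hK'K.subset⟩

/-- In a connective domain, a pre-island `S` meeting `T ∈ 𝒞` with `T ⊄ S`
admits a point of `T \ S` below all of `S`. -/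
lemma escape [DecidableEq U] {𝒞 𝒦 : Finset (Finset U)} (hconn : Connective 𝒞 𝒦)
    {h : U → ℝ} {S T : Finset U} (hS : IsPreIsland 𝒞 𝒦 h S) (hT : T ∈ 𝒞)
    (hST : (S ∩ T).Nonempty) (hTS : ¬T ⊆ S) :
    ∃ k ∈ T, k ∉ S ∧ ∀ s ∈ S, h k < h s := by
  obtain ⟨K, hK, hSK, hKsub⟩ := hconn S hS.1 T hT hST hTS
  obtain ⟨K', hK', hcov, hsub⟩ := exists_cover_le 𝒦 S K hK hSK
  obtain ⟨k, hkK, hk⟩ := hS.2.2 K' hK' hcov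
  have hknS : k ∉ S := fun hkS => lt_irrefl _ (hk k hkS)
  have hkST : k ∈ S ∪ T := hKsub (hsub hkK)
  exact ⟨k, (Finset.mem_union.1 hkST).resolve_left hknS, hknS, hk⟩

lemma connective_cdw [Fintype U] [DecidableEq U] {𝒞 𝒦 : Finset (Finset U)}
    (hconn : Connective 𝒞 𝒦) (𝒮 : Finset (Finset U))
    (hsys : IsSystemOfPreIslands 𝒞 𝒦 𝒮) : CDWIndependent 𝒮 := by
  obtain ⟨h, hsys⟩ := hsys
  have hcd : CDIndependent 𝒮 := by
    intro A hA B hB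
    by_contra hcon
    push_neg at hcon
    obtain ⟨hAB, hBA, hne⟩ := hcon
    have hABne : (A ∩ B).Nonempty := hne
    have hBAne : (B ∩ A).Nonempty := by rwa [Finset.inter_comm]
    have hA' := (hsys A).1 hA
    have hB' := (hsys B).1 hB
    obtain ⟨k, hkB, hknA, hk⟩ := escape hconn hA' hB'.1 hABne hBA
    obtain ⟨k', hk'A, hk'nB, hk'⟩ := escape hconn hB' hA'.1 hBAne hAB
    exact lt_asymm (hk k' hk'A) (hk' k hkB)
  refine ⟨hcd, ?_⟩
  intro H hH 𝒢 h𝒢 h𝒢ne hHsup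
  by_contra hcon
  push_neg at hcon
  have hH' := (hsys H).1 hH
  obtain ⟨m, hmH, hm⟩ := H.exists_min_image h hH'.2.1
  have hmsup : m ∈ 𝒢.sup id := hHsup hmH
  obtain ⟨G, hG𝒢, hmG⟩ := Finset.mem_sup.1 hmsup
  have hG' := (hsys G).1 (h𝒢 hG𝒢)
  have hGH : (G ∩ H).Nonempty := ⟨m, Finset.mem_inter.2 ⟨hmG, hmH⟩⟩
  obtain ⟨k, hkH, hknG, hk⟩ := escape hconn hG' hH'.1 hGH (hcon G hG𝒢)
  exact absurd (hm k hkH) (not_le.2 (hk m hmG))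

lemma cd_connective [Fintype U] [DecidableEq U] {𝒞 𝒦 : Finset (Finset U)}
    (hdom : IslandDomain 𝒞 𝒦)
    (hcd : ∀ 𝒮 : Finset (Finset U), IsSystemOfPreIslands 𝒞 𝒦 𝒮 → CDIndependent 𝒮) :
    Connective 𝒞 𝒦 := by
  classical
  intro A hA B hB hAB hBA
  by_contra hK
  push_neg at hK
  -- first, A ⊄ B
  have hAnB : ¬A ⊆ B := by
    intro hsub
    have hABss : A ⊂ B := ⟨hsub, hBA⟩
    exact hK B (hdom.1 hB) hABss Finset.subset_union_right
  -- the height function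
  set h : U → ℝ := fun u => if u ∈ A \ B then 0 else if u ∈ A ∪ B then 1 else -1 with hh
  have hvalA : ∀ s ∈ A, (0:ℝ) ≤ h s := by
    intro s hs
    simp only [hh]
    by_cases h1 : s ∈ A \ B
    · rw [if_pos h1]
    · rw [if_neg h1, if_pos (Finset.mem_union.2 (Or.inl hs))]; norm_num
  have hvalB : ∀ s ∈ B, h s = 1 := by
    intro s hs
    have h1 : s ∉ A \ B := fun hx => (Finset.mem_sdiff.1 hx).2 hs
    simp only [hh]
    rw [if_neg h1, if_pos (Finset.mem_union.2 (Or.inr hs))]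
  have hAisl : IsPreIsland 𝒞 𝒦 h A := by
    refine ⟨hA, ⟨hAB.choose, (Finset.mem_inter.1 hAB.choose_spec).1⟩, ?_⟩
    intro K hKmem hcov
    have hnsub : ¬K ⊆ A ∪ B := hK K hKmem hcov.1
    obtain ⟨k, hkK, hknAB⟩ := Finset.not_subset.1 hnsub
    refine ⟨k, hkK, fun s hs => ?_⟩
    have hknAB' : k ∉ A \ B := fun hx =>
      hknAB (Finset.mem_union.2 (Or.inl (Finset.mem_sdiff.1 hx).1))
    have : h k = -1 := by simp only [hh]; rw [if_neg hknAB', if_neg hknAB]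
    rw [this]
    linarith [hvalA s hs]
  have hBisl : IsPreIsland 𝒞 𝒦 h B := by
    refine ⟨hB, ⟨hAB.choose, (Finset.mem_inter.1 hAB.choose_spec).2⟩, ?_⟩
    intro K hKmem hcov
    by_cases hsub : K ⊆ A ∪ B
    · obtain ⟨x, hxK, hxnB⟩ := Finset.not_subset.1 hcov.1.not_subset
      have hxA : x ∈ A := (Finset.mem_union.1 (hsub hxK)).resolve_right hxnB
      refine ⟨x, hxK, fun s hs => ?_⟩
      have : h x = 0 := by simp only [hh]; rw [if_pos (Finset.mem_sdiff.2 ⟨hxA, hxnB⟩)]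
      rw [this, hvalB s hs]; norm_num
    · obtain ⟨k, hkK, hknAB⟩ := Finset.not_subset.1 hsub
      refine ⟨k, hkK, fun s hs => ?_⟩
      have hknAB' : k ∉ A \ B := fun hx =>
        hknAB (Finset.mem_union.2 (Or.inl (Finset.mem_sdiff.1 hx).1))
      have : h k = -1 := by simp only [hh]; rw [if_neg hknAB', if_neg hknAB]
      rw [this, hvalB s hs]; norm_num
  -- the system of pre-islands of h
  set 𝒮 : Finset (Finset U) :=
    Finset.univ.filter (fun S => IsPreIsland 𝒞 𝒦 h S) with h𝒮
  have hsys : IsSystemOfPreIslands 𝒞 𝒦 𝒮 :=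
    ⟨h, fun S => by simp [h𝒮]⟩
  have := hcd 𝒮 hsys A (by simp [h𝒮, hAisl]) B (by simp [h𝒮, hBisl])
  rcases this with h1 | h1 | h1
  · exact hAnB h1
  · exact hBA h1
  · exact Finset.nonempty_iff_ne_empty.1 hAB h1

/-- connective ↔ all systems of pre-islands CD-independent
↔ all systems of pre-islands CDW-independent. -/
theorem connective_iff_cd_iff_cdw [Fintype U] [DecidableEq U] [Nonempty U]
    (𝒞 𝒦 : Finset (Finset U)) (hdom : IslandDomain 𝒞 𝒦) :
    (Connective 𝒞 𝒦 ↔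
        ∀ 𝒮 : Finset (Finset U), IsSystemOfPreIslands 𝒞 𝒦 𝒮 → CDIndependent 𝒮) ∧
      (Connective 𝒞 𝒦 ↔
        ∀ 𝒮 : Finset (Finset U), IsSystemOfPreIslands 𝒞 𝒦 𝒮 → CDWIndependent 𝒮) := by
  refine ⟨⟨fun hc 𝒮 hs => (connective_cdw hc 𝒮 hs).1, cd_connective hdom⟩,
    fun hc 𝒮 hs => connective_cdw hc 𝒮 hs,
    fun H => cd_connective hdom (fun 𝒮 hs => (H 𝒮 hs).1)⟩
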